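/- Let L ≥ 1 be a natural number and let λ ≥ 2L be real. Then for every i ∈ {0,1,…,L}, (i/λ − 1)·i!/λ^i ≤ −(1/2)·(L/(e·λ))^L. -/
import Mathlib


open Real Finset

theorem stmt_6 (L : ℕ) (hL : 1 ≤ L) (lam : ℝ) (hlam : 2 * (L : ℝ) ≤ lam)
    (i : ℕ) (hi : i ≤ L) :
    ((i : ℝ) / lam - 1) * (Nat.factorial i : ℝ) / lam ^ i ≤
      -(1 / 2) * ((L : ℝ) / (Real.exp 1 * lam)) ^ L := by
  have hL1 : (1 : ℝ) ≤ (L : ℝ) := by exact_mod_cast hL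
  have hlam0 : (0 : ℝ) < lam := by linarith
  have hiL : (i : ℝ) ≤ (L : ℝ) := by exact_mod_cast hi
  -- step 1: i/lam - 1 ≤ -1/2
  have h1 : (i : ℝ) / lam - 1 ≤ -(1 / 2) := by
    have : (i : ℝ) / lam ≤ 1 / 2 := by
      rw [div_le_div_iff₀ hlam0 (by norm_num)]
      linarith
    linarith
  -- step 2: factorial monotone ratio: L!/lam^L ≤ i!/lam^i
  have key : ∀ j : ℕ, j ≤ L → (Nat.factorial j : ℝ) / lam ^ j ≤
      (Nat.factorial i : ℝ) / lam ^ i ∨ j < i := by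
    intro j hj
    by_cases hij : j < i
    · exact Or.inr hij
    · left
      push_neg at hij
      clear h1
      induction j with
      | zero => have : i = 0 := Nat.le_zero.mp hij; simp [this]
      | succ n ih =>
        rcases Nat.lt_or_ge i (n+1) with h | h
        · have hn : i ≤ n := Nat.lt_succ_iff.mp h
          have hnL : n ≤ L := Nat.le_of_succ_le hj
          have step : (Nat.factorial (n+1) : ℝ) / lam ^ (n+1) ≤
              (Nat.factorial n : ℝ) / lam ^ n := by
            rw [Nat.factorial_succ, pow_succ]
            push_cast
            rw [div_le_div_iff₀ (by positivity) (by positivity)]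
            have hfn : (0:ℝ) < (Nat.factorial n : ℝ) := by
              exact_mod_cast Nat.factorial_pos n
            have hn1 : ((n:ℝ) + 1) ≤ lam := by
              have : ((n:ℝ) + 1) ≤ (L : ℝ) := by exact_mod_cast Nat.succ_le_of_lt (Nat.lt_of_lt_of_le (Nat.lt_succ_self n) hj)
              linarith
            nlinarith [mul_le_mul_of_nonneg_right (mul_le_mul_of_nonneg_right hn1 hfn.le) (pow_pos hlam0 n).le]
          exact step.trans (ih hnL hn)
        · have : i = n + 1 := le_antisymm hij h
          simp [this]
  have hfact : (Nat.factorial L : ℝ) / lam ^ L ≤ (Nat.factorial i : ℝ) / lam ^ i := by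
    rcases key L le_rfl with h | h
    · exact h
    · exact absurd hi (Nat.not_le.mpr h)
  -- step 3: (L/(e*lam))^L ≤ L!/lam^L
  have hexp : ((L : ℝ) / (Real.exp 1 * lam)) ^ L ≤ (Nat.factorial L : ℝ) / lam ^ L := by
    have h0 := Real.pow_div_factorial_le_exp (x := (L : ℝ)) (by positivity) L
    have hfL : (0:ℝ) < (Nat.factorial L : ℝ) := by exact_mod_cast Nat.factorial_pos L
    have hLL : (L : ℝ) ^ L ≤ Real.exp 1 ^ L * (Nat.factorial L : ℝ) := by
      rw [← Real.exp_nat_mul]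
      rw [div_le_iff₀ hfL] at h0
      simpa [mul_comm] using h0
    rw [div_pow, mul_pow, div_le_div_iff₀ (by positivity) (by positivity)]
    calc (L:ℝ)^L * lam ^ L ≤ Real.exp 1 ^ L * (Nat.factorial L : ℝ) * lam ^ L := by
          exact mul_le_mul_of_nonneg_right hLL (by positivity)
      _ = (Nat.factorial L : ℝ) * (Real.exp 1 ^ L * lam ^ L) := by ring
  -- combine
  have hpos : (0:ℝ) < ((L : ℝ) / (Real.exp 1 * lam)) ^ L := by positivity
  have hy : ((L : ℝ) / (Real.exp 1 * lam)) ^ L ≤ (Nat.factorial i : ℝ) / lam ^ i :=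
    hexp.trans hfact
  rw [mul_div_assoc]
  calc ((i : ℝ) / lam - 1) * ((Nat.factorial i : ℝ) / lam ^ i)
      ≤ -(1/2) * ((Nat.factorial i : ℝ) / lam ^ i) := by
        apply mul_le_mul_of_nonneg_right h1 (by positivity)
    _ ≤ -(1/2) * ((L : ℝ) / (Real.exp 1 * lam)) ^ L := by nlinarith
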